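/- Let T > 0, δ > 0 and P, V, W ∈ ℝ², and define f: [0,T] → ℝ² by f(t) = tV + (t²/T²)(3P − 2TV − TW) + (t³/T³)(−2P + TV + TW). Then f(0) = 0, f(T) = P, f'(0) = V and f'(T) = W. Moreover, if |V − W| ≤ δ and |P − TV| ≤ δT, then |f'(t) − V| ≤ 17δ for all t ∈ [0,T]. -/

import Mathlib

open MeasureTheory Set

set_option maxHeartbeats 1600000 in
/-- The cubic interpolation curve `f(t) = tV + (t²/T²)(3P − 2TV − TW) + (t³/T³)(−2P + TV + TW)`
satisfies `f(0) = 0`, `f(T) = P`, `f'(0) = V`, `f'(T) = W`, and if `|V − W| ≤ δ` and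
`|P − TV| ≤ δT` then `|f'(t) − V| ≤ 17δ` on `[0,T]`. -/
theorem cubic_interpolation (T δ : ℝ) (hT : 0 < T) (hδ : 0 < δ)
    (P V W : EuclideanSpace ℝ (Fin 2))
    (f : ℝ → EuclideanSpace ℝ (Fin 2))
    (hf : ∀ t : ℝ, f t = t • V + (t ^ 2 / T ^ 2) • ((3:ℝ) • P - (2 * T) • V - T • W)
        + (t ^ 3 / T ^ 3) • ((-2:ℝ) • P + T • V + T • W)) :
    f 0 = 0 ∧ f T = P ∧ HasDerivAt f V 0 ∧ HasDerivAt f W T ∧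
    ((‖V - W‖ ≤ δ ∧ ‖P - T • V‖ ≤ δ * T) →
      ∀ t ∈ Set.Icc (0:ℝ) T, ‖deriv f t - V‖ ≤ 17 * δ) := by
  set A := (3:ℝ) • P - (2 * T) • V - T • W with hA
  set B := (-2:ℝ) • P + T • V + T • W with hB
  have hTne : T ≠ 0 := hT.ne'
  have hfe : f = fun t : ℝ => t • V + (t ^ 2 / T ^ 2) • A + (t ^ 3 / T ^ 3) • B :=
    funext hf
  have hderiv : ∀ t : ℝ,
      HasDerivAt f (V + (2 * t / T ^ 2) • A + (3 * t ^ 2 / T ^ 3) • B) t := by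
    intro t
    have h1 : HasDerivAt (fun t : ℝ => t • V) ((1:ℝ) • V) t :=
      (hasDerivAt_id t).smul_const V
    have h2 : HasDerivAt (fun t : ℝ => (t ^ 2 / T ^ 2) • A) ((2 * t / T ^ 2) • A) t := by
      have hs : HasDerivAt (fun t : ℝ => t ^ 2 / T ^ 2) (2 * t / T ^ 2) t := by
        have := (hasDerivAt_pow 2 t).div_const (T ^ 2)
        simpa [mul_comm] using this
      exact hs.smul_const A
    have h3 : HasDerivAt (fun t : ℝ => (t ^ 3 / T ^ 3) • B) ((3 * t ^ 2 / T ^ 3) • B) t := by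
      have hs : HasDerivAt (fun t : ℝ => t ^ 3 / T ^ 3) (3 * t ^ 2 / T ^ 3) t := by
        have := (hasDerivAt_pow 3 t).div_const (T ^ 3)
        simpa [mul_comm] using this
      exact hs.smul_const B
    have := (h1.add h2).add h3
    rw [hfe]
    rw [one_smul] at this
    exact this
  refine ⟨?_, ?_, ?_, ?_, ?_⟩
  · rw [hf]; simp
  · rw [hf]
    have h2 : T ^ 2 / T ^ 2 = (1:ℝ) := div_self (pow_ne_zero _ hTne)
    have h3 : T ^ 3 / T ^ 3 = (1:ℝ) := div_self (pow_ne_zero _ hTne)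
    rw [h2, h3, one_smul, one_smul, hA, hB]
    module
  · simpa using hderiv 0
  · have := hderiv T
    have heq : V + (2 * T / T ^ 2) • A + (3 * T ^ 2 / T ^ 3) • B = W := by
      rw [hA, hB]
      match_scalars <;> field_simp <;> ring
    rwa [heq] at this
  · rintro ⟨hVW, hPV⟩ t ⟨ht0, htT⟩
    have hAeq : A = (3:ℝ) • (P - T • V) + T • (V - W) := by rw [hA]; module
    have hBeq : B = (-2:ℝ) • (P - T • V) - T • (V - W) := by rw [hB]; module
    have hAn : ‖A‖ ≤ 4 * δ * T := by
      rw [hAeq]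
      calc ‖(3:ℝ) • (P - T • V) + T • (V - W)‖
          ≤ ‖(3:ℝ) • (P - T • V)‖ + ‖T • (V - W)‖ := norm_add_le _ _
        _ ≤ 3 * (δ * T) + T * δ := by
            rw [norm_smul, norm_smul, Real.norm_eq_abs, Real.norm_eq_abs,
              abs_of_pos hT]
            have h3 : |(3:ℝ)| = 3 := by norm_num
            rw [h3]
            have := norm_nonneg (V - W)
            nlinarith
        _ = 4 * δ * T := by ring
    have hBn : ‖B‖ ≤ 3 * δ * T := by
      rw [hBeq]
      calc ‖(-2:ℝ) • (P - T • V) - T • (V - W)‖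
          ≤ ‖(-2:ℝ) • (P - T • V)‖ + ‖T • (V - W)‖ := norm_sub_le _ _
        _ ≤ 2 * (δ * T) + T * δ := by
            rw [norm_smul, norm_smul, Real.norm_eq_abs, Real.norm_eq_abs,
              abs_of_pos hT]
            have h2 : |(-2:ℝ)| = 2 := by norm_num
            rw [h2]
            have := norm_nonneg (V - W)
            nlinarith
        _ = 3 * δ * T := by ring
    have hd : deriv f t = V + (2 * t / T ^ 2) • A + (3 * t ^ 2 / T ^ 3) • B :=
      (hderiv t).deriv
    have hsub : deriv f t - V = (2 * t / T ^ 2) • A + (3 * t ^ 2 / T ^ 3) • B := by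
      rw [hd]; abel
    rw [hsub]
    have h1 : (0:ℝ) ≤ 2 * t / T ^ 2 := by positivity
    have h2 : (0:ℝ) ≤ 3 * t ^ 2 / T ^ 3 := by positivity
    calc ‖(2 * t / T ^ 2) • A + (3 * t ^ 2 / T ^ 3) • B‖
        ≤ (2 * t / T ^ 2) * ‖A‖ + (3 * t ^ 2 / T ^ 3) * ‖B‖ := by
          refine (norm_add_le _ _).trans ?_
          rw [norm_smul, norm_smul, Real.norm_eq_abs, Real.norm_eq_abs,
            abs_of_nonneg h1, abs_of_nonneg h2]
      _ ≤ (2 * t / T ^ 2) * (4 * δ * T) + (3 * t ^ 2 / T ^ 3) * (3 * δ * T) :=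
          add_le_add (mul_le_mul_of_nonneg_left hAn h1)
            (mul_le_mul_of_nonneg_left hBn h2)
      _ ≤ 17 * δ := by
          have ht2 : t * t ≤ T * T := mul_le_mul htT htT ht0 hT.le
          have ha : (2 * t / T ^ 2) * (4 * δ * T) ≤ 8 * δ := by
            rw [div_mul_eq_mul_div, div_le_iff₀ (by positivity)]
            nlinarith [mul_le_mul_of_nonneg_left htT (mul_nonneg (mul_nonneg (by norm_num : (0:ℝ) ≤ 8) hδ.le) hT.le)]
          have hb : (3 * t ^ 2 / T ^ 3) * (3 * δ * T) ≤ 9 * δ := by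
            rw [div_mul_eq_mul_div, div_le_iff₀ (by positivity)]
            nlinarith [mul_le_mul_of_nonneg_left ht2 (mul_nonneg (mul_nonneg (by norm_num : (0:ℝ) ≤ 9) hδ.le) hT.le)]
          linarith
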